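/- For homotopy of Gauss words (α = {a}, τ = id, S = {(a,a,a)}), the group G_3 is isomorphic to Z; that is, in the group generated by Gauss words modulo the four types of relations with truncation parameter 3, the generators ABAB, ABACBC, ABCABC, ABCACB, ABCBAC, ABCBCA are all zero. -/

import Mathlib

attribute [local instance] Classical.propDecidable

/-!
Gauss words are modelled as lists of letters (natural numbers) in which every
letter appearing does so exactly twice.  Subwords are obtained by restriction to a
subset of the letters; isomorphism is a bijective renaming of letters.
-/

def lettersOf (w : List ℕ) : Finset ℕ := w.toFinset

def rank (w : List ℕ) : ℕ := (lettersOf w).card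

def IsGauss (w : List ℕ) : Prop := ∀ x ∈ w, w.count x = 2

/-- The subword of `w` consisting of the letters in `T`. -/
def restrict (w : List ℕ) (T : Finset ℕ) : List ℕ := w.filter (fun x => decide (x ∈ T))

/-- Isomorphism of Gauss words: a bijective renaming of letters. -/
def Iso (v w : List ℕ) : Prop := ∃ σ : ℕ ≃ ℕ, v.map σ = w

/-- The number of subwords of `w` isomorphic to `q`. -/
noncomputable def bracketN (q w : List ℕ) : ℕ :=
  ((lettersOf w).powerset.filter (fun T => Iso (restrict w T) q)).card

/-- The homotopy moves H1, H2, H3 on Gauss words. -/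
inductive HMove : List ℕ → List ℕ → Prop
  | h1 (x y : List ℕ) (A : ℕ) : HMove (x ++ [A, A] ++ y) (x ++ y)
  | h2 (x y z : List ℕ) (A B : ℕ) :
      HMove (x ++ [A, B] ++ y ++ [B, A] ++ z) (x ++ y ++ z)
  | h3 (x y z t : List ℕ) (A B C : ℕ) :
      HMove (x ++ [A, B] ++ y ++ [A, C] ++ z ++ [B, C] ++ t)
            (x ++ [B, A] ++ y ++ [C, A] ++ z ++ [C, B] ++ t)

/-- Homotopy of Gauss words: generated by isomorphism and the moves H1, H2, H3. -/
def Homotopic : List ℕ → List ℕ → Prop :=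
  Relation.EqvGen (fun v w => HMove v w ∨ Iso v w)

-- The six rank-4 Gauss words (letters A,B,C,D as 0,1,2,3).

/-- The generators of the groups `G_n` for Gauss words. -/
def GWgen := {w : List ℕ // IsGauss w}

open FreeAbelianGroup in
/-- The relations defining `G_n` for homotopy of Gauss words: identification of
isomorphic Gauss words, `xAAy = 0`, `xAByBAz + xAyAz + xByBz = 0`, the
H3-relation, and `w = 0` for every Gauss word of rank `> n`. -/
def relSet (n : ℕ) : Set (FreeAbelianGroup GWgen) :=
  {g | ∃ p q : GWgen, Iso p.1 q.1 ∧ g = of p - of q} ∪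
  {g | ∃ (p : GWgen) (x y : List ℕ) (A : ℕ),
        p.1 = x ++ [A, A] ++ y ∧ g = of p} ∪
  {g | ∃ (p q q' : GWgen) (x y z : List ℕ) (A B : ℕ),
        p.1 = x ++ [A, B] ++ y ++ [B, A] ++ z ∧
        q.1 = x ++ [A] ++ y ++ [A] ++ z ∧
        q'.1 = x ++ [B] ++ y ++ [B] ++ z ∧
        g = of p + of q + of q'} ∪
  {g | ∃ (p1 p2 p3 p4 q1 q2 q3 q4 : GWgen) (x y z t : List ℕ) (A B C : ℕ),
        p1.1 = x ++ [A,B] ++ y ++ [A,C] ++ z ++ [B,C] ++ t ∧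
        p2.1 = x ++ [A,B] ++ y ++ [A] ++ z ++ [B] ++ t ∧
        p3.1 = x ++ [A] ++ y ++ [A,C] ++ z ++ [C] ++ t ∧
        p4.1 = x ++ [B] ++ y ++ [C] ++ z ++ [B,C] ++ t ∧
        q1.1 = x ++ [B,A] ++ y ++ [C,A] ++ z ++ [C,B] ++ t ∧
        q2.1 = x ++ [B,A] ++ y ++ [A] ++ z ++ [B] ++ t ∧
        q3.1 = x ++ [A] ++ y ++ [C,A] ++ z ++ [C] ++ t ∧
        q4.1 = x ++ [B] ++ y ++ [C] ++ z ++ [C,B] ++ t ∧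
        g = of p1 + of p2 + of p3 + of p4 - of q1 - of q2 - of q3 - of q4} ∪
  {g | ∃ p : GWgen, n < rank p.1 ∧ g = of p}

/-- The group `G_n` for homotopy of Gauss words. -/
abbrev Gn (n : ℕ) := FreeAbelianGroup GWgen ⧸ AddSubgroup.closure (relSet n)

/-- The class of a Gauss word in `G_n`. -/
def cls (n : ℕ) (p : GWgen) : Gn n :=
  QuotientAddGroup.mk (FreeAbelianGroup.of p)


-- ========================= auxiliary development =========================

attribute [-instance] Classical.propDecidable

open FreeAbelianGroup

def isGaussB (w : List ℕ) : Bool := w.all (fun x => w.count x == 2)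

lemma isGaussB_iff {w : List ℕ} : isGaussB w = true ↔ IsGauss w := by
  simp [isGaussB, IsGauss]

/-- Build a generator from a boolean check. -/
def gw (w : List ℕ) (h : isGaussB w = true := by rfl) : GWgen := ⟨w, isGaussB_iff.1 h⟩

def hasDD : List ℕ → Bool
  | a :: b :: l => (a == b) || hasDD (b :: l)
  | _ => false

lemma hasDD_spec : ∀ {v : List ℕ}, hasDD v = true → ∃ x y a, v = x ++ [a,a] ++ y
  | a :: b :: l, h => by
      have h' : a = b ∨ hasDD (b :: l) = true := by simpa [hasDD] using h
      rcases h' with rfl | h'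
      · exact ⟨[], l, a, by simp⟩
      · obtain ⟨x, y, c, hx⟩ := hasDD_spec h'
        exact ⟨a :: x, y, c, by simp [hx]⟩

lemma isGauss_map {w : List ℕ} (σ : ℕ ≃ ℕ) (h : IsGauss w) : IsGauss (w.map σ) := by
  intro x hx
  obtain ⟨y, hy, rfl⟩ := List.mem_map.1 hx
  rw [List.count_map_of_injective _ _ σ.injective]
  exact h y hy

lemma length_eq {w : List ℕ} (h : IsGauss w) : w.length = 2 * rank w := by
  have h1 := Multiset.toFinset_sum_count_eq (w : Multiset ℕ)
  simp only [Multiset.coe_count] at h1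
  have h3 : (w : Multiset ℕ).toFinset = w.toFinset := rfl
  rw [h3] at h1
  have h2 : ∑ a ∈ w.toFinset, w.count a = ∑ a ∈ w.toFinset, 2 :=
    Finset.sum_congr rfl (fun x hx => h x (List.mem_toFinset.1 hx))
  rw [h2, Finset.sum_const, smul_eq_mul] at h1
  have h4 : Multiset.card (w : Multiset ℕ) = w.length := rfl
  rw [h4] at h1
  rw [rank, lettersOf]
  omega

lemma rank_eq_dedup_length (w : List ℕ) : rank w = w.dedup.length := List.card_toFinset w

lemma exists_perm3 {a b c : ℕ} (hab : a ≠ b) (hac : a ≠ c) (hbc : b ≠ c) :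
    ∃ σ : ℕ ≃ ℕ, σ a = 0 ∧ σ b = 1 ∧ σ c = 2 := by
  set σ1 := Equiv.swap a 0 with hσ1
  have h1a : σ1 a = 0 := Equiv.swap_apply_left _ _
  have hb1 : σ1 b ≠ 0 := by rw [← h1a]; exact fun h => hab (σ1.injective h).symm
  have hc1 : σ1 c ≠ 0 := by rw [← h1a]; exact fun h => hac (σ1.injective h).symm
  have hbc1 : σ1 b ≠ σ1 c := fun h => hbc (σ1.injective h)
  set σ2 := Equiv.swap (σ1 b) 1 with hσ2
  have h2b : σ2 (σ1 b) = 1 := Equiv.swap_apply_left _ _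
  have h20 : σ2 0 = 0 := Equiv.swap_apply_of_ne_of_ne (Ne.symm hb1) (by decide)
  have hc2_0 : σ2 (σ1 c) ≠ 0 := by rw [← h20]; exact fun h => hc1 (σ2.injective h)
  have hc2_1 : σ2 (σ1 c) ≠ 1 := by rw [← h2b]; exact fun h => hbc1.symm (σ2.injective h)
  refine ⟨(σ1.trans σ2).trans (Equiv.swap (σ2 (σ1 c)) 2), ?_, ?_, ?_⟩ <;>
    simp only [Equiv.trans_apply]
  · rw [h1a, h20]; exact Equiv.swap_apply_of_ne_of_ne (Ne.symm hc2_0) (by decide)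
  · rw [h2b]; exact Equiv.swap_apply_of_ne_of_ne (Ne.symm hc2_1) (by decide)
  · exact Equiv.swap_apply_left _ _

lemma exists_perm2 {a b : ℕ} (hab : a ≠ b) :
    ∃ σ : ℕ ≃ ℕ, σ a = 0 ∧ σ b = 1 := by
  set σ1 := Equiv.swap a 0
  have h1a : σ1 a = 0 := Equiv.swap_apply_left _ _
  have hb1 : σ1 b ≠ 0 := by rw [← h1a]; exact fun h => hab (σ1.injective h).symm
  refine ⟨σ1.trans (Equiv.swap (σ1 b) 1), ?_, ?_⟩ <;> simp only [Equiv.trans_apply]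
  · rw [h1a]; exact Equiv.swap_apply_of_ne_of_ne (Ne.symm hb1) (by decide)
  · exact Equiv.swap_apply_left _ _

set_option maxRecDepth 10000 in
lemma enum6 : ∀ a b c d e f : Fin 3,
    isGaussB [a.1,b.1,c.1,d.1,e.1,f.1] = true →
    [a.1,b.1,c.1,d.1,e.1,f.1].dedup = [0,1,2] →
    hasDD [a.1,b.1,c.1,d.1,e.1,f.1] = true ∨
    [a.1,b.1,c.1,d.1,e.1,f.1] = [0,1,0,2,1,2] ∨
    [a.1,b.1,c.1,d.1,e.1,f.1] = [0,1,2,0,1,2] ∨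
    [a.1,b.1,c.1,d.1,e.1,f.1] = [0,2,1,0,1,2] ∨
    [a.1,b.1,c.1,d.1,e.1,f.1] = [1,0,2,0,1,2] ∨
    [a.1,b.1,c.1,d.1,e.1,f.1] = [2,0,1,0,1,2] := by decide

lemma enum4 : ∀ a b c d : Fin 2,
    isGaussB [a.1,b.1,c.1,d.1] = true →
    [a.1,b.1,c.1,d.1].dedup = [0,1] →
    hasDD [a.1,b.1,c.1,d.1] = true ∨ [a.1,b.1,c.1,d.1] = [0,1,0,1] := by decide

/-- The relation subgroup. -/
def S : AddSubgroup (FreeAbelianGroup GWgen) := AddSubgroup.closure (relSet 3)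

lemma mem_iso (p q : GWgen) (h : Iso p.1 q.1) : of p - of q ∈ S :=
  AddSubgroup.subset_closure (Or.inl (Or.inl (Or.inl (Or.inl ⟨p, q, h, rfl⟩))))

lemma mem_dd (p : GWgen) (x y : List ℕ) (A : ℕ) (h : p.1 = x ++ [A,A] ++ y) : of p ∈ S :=
  AddSubgroup.subset_closure (Or.inl (Or.inl (Or.inl (Or.inr ⟨p, x, y, A, h, rfl⟩))))

lemma mem_h2 (p q q' : GWgen) (x y z : List ℕ) (A B : ℕ)
    (h1 : p.1 = x ++ [A, B] ++ y ++ [B, A] ++ z)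
    (h2 : q.1 = x ++ [A] ++ y ++ [A] ++ z)
    (h3 : q'.1 = x ++ [B] ++ y ++ [B] ++ z) :
    of p + of q + of q' ∈ S :=
  AddSubgroup.subset_closure
    (Or.inl (Or.inl (Or.inr ⟨p, q, q', x, y, z, A, B, h1, h2, h3, rfl⟩)))

lemma mem_h3 (p1 p2 p3 p4 q1 q2 q3 q4 : GWgen) (x y z t : List ℕ) (A B C : ℕ)
    (h1 : p1.1 = x ++ [A,B] ++ y ++ [A,C] ++ z ++ [B,C] ++ t)
    (h2 : p2.1 = x ++ [A,B] ++ y ++ [A] ++ z ++ [B] ++ t)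
    (h3 : p3.1 = x ++ [A] ++ y ++ [A,C] ++ z ++ [C] ++ t)
    (h4 : p4.1 = x ++ [B] ++ y ++ [C] ++ z ++ [B,C] ++ t)
    (h5 : q1.1 = x ++ [B,A] ++ y ++ [C,A] ++ z ++ [C,B] ++ t)
    (h6 : q2.1 = x ++ [B,A] ++ y ++ [A] ++ z ++ [B] ++ t)
    (h7 : q3.1 = x ++ [A] ++ y ++ [C,A] ++ z ++ [C] ++ t)
    (h8 : q4.1 = x ++ [B] ++ y ++ [C] ++ z ++ [C,B] ++ t) :
    of p1 + of p2 + of p3 + of p4 - of q1 - of q2 - of q3 - of q4 ∈ S :=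
  AddSubgroup.subset_closure
    (Or.inl (Or.inr ⟨p1, p2, p3, p4, q1, q2, q3, q4, x, y, z, t, A, B, C,
      h1, h2, h3, h4, h5, h6, h7, h8, rfl⟩))

lemma mem_rank (p : GWgen) (h : 3 < rank p.1) : of p ∈ S :=
  AddSubgroup.subset_closure (Or.inr ⟨p, h, rfl⟩)

/-- The six canonical nontrivial words of rank at most 3 all lie in `S`. -/
lemma canon_mem :
    of (gw [0,1,0,1]) ∈ S ∧ of (gw [0,1,0,2,1,2]) ∈ S ∧ of (gw [0,1,2,0,1,2]) ∈ S ∧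
    of (gw [0,1,2,0,2,1]) ∈ S ∧ of (gw [0,1,2,1,0,2]) ∈ S ∧ of (gw [0,1,2,1,2,0]) ∈ S := by
  have hE : FreeAbelianGroup.of (gw [0,1,2,1,2,0]) ∈ S := by
    have rel := mem_h3 (gw [3,0,1,0,2,1,2,3]) (gw [3,0,1,0,1,3]) (gw [3,0,0,2,2,3]) (gw [3,1,2,1,2,3]) (gw [3,1,0,2,0,2,1,3]) (gw [3,1,0,0,1,3]) (gw [3,0,2,0,2,3]) (gw [3,1,2,2,1,3]) [3] [] [] [3] 0 1 2 rfl rfl rfl rfl rfl rfl rfl rfl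
    have m0 := mem_rank (gw [3,0,1,0,2,1,2,3]) (by decide)
    have m1 := mem_iso (gw [3,0,1,0,1,3]) (gw [0,1,2,1,2,0]) ⟨((Equiv.swap 1 2).trans ((Equiv.swap 0 1).trans (Equiv.swap 0 3))), by decide⟩
    have m2 := mem_dd (gw [3,0,0,2,2,3]) [3] [2,2,3] 0 rfl
    have m3 := mem_iso (gw [3,1,2,1,2,3]) (gw [0,1,2,1,2,0]) ⟨(Equiv.swap 0 3), by decide⟩
    have m4 := mem_rank (gw [3,1,0,2,0,2,1,3]) (by decide)
    have m5 := mem_dd (gw [3,1,0,0,1,3]) [3,1] [1,3] 0 rfl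
    have m6 := mem_iso (gw [3,0,2,0,2,3]) (gw [0,1,2,1,2,0]) ⟨((Equiv.swap 0 1).trans (Equiv.swap 0 3)), by decide⟩
    have m7 := mem_dd (gw [3,1,2,2,1,3]) [3,1] [1,3] 2 rfl
    have key : FreeAbelianGroup.of (gw [0,1,2,1,2,0]) = (((((((((FreeAbelianGroup.of (gw [3,0,1,0,2,1,2,3]) + FreeAbelianGroup.of (gw [3,0,1,0,1,3]) + FreeAbelianGroup.of (gw [3,0,0,2,2,3]) + FreeAbelianGroup.of (gw [3,1,2,1,2,3]) - FreeAbelianGroup.of (gw [3,1,0,2,0,2,1,3]) - FreeAbelianGroup.of (gw [3,1,0,0,1,3]) - FreeAbelianGroup.of (gw [3,0,2,0,2,3]) - FreeAbelianGroup.of (gw [3,1,2,2,1,3])) - FreeAbelianGroup.of (gw [3,0,1,0,2,1,2,3])) - (FreeAbelianGroup.of (gw [3,0,1,0,1,3]) - FreeAbelianGroup.of (gw [0,1,2,1,2,0]))) - FreeAbelianGroup.of (gw [3,0,0,2,2,3])) - (FreeAbelianGroup.of (gw [3,1,2,1,2,3]) - FreeAbelianGroup.of (gw [0,1,2,1,2,0])))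 + FreeAbelianGroup.of (gw [3,1,0,2,0,2,1,3])) + FreeAbelianGroup.of (gw [3,1,0,0,1,3])) + (FreeAbelianGroup.of (gw [3,0,2,0,2,3]) - FreeAbelianGroup.of (gw [0,1,2,1,2,0]))) + FreeAbelianGroup.of (gw [3,1,2,2,1,3])) := by abel
    exact key ▸ (S.add_mem (S.add_mem (S.add_mem (S.add_mem (S.sub_mem (S.sub_mem (S.sub_mem (S.sub_mem rel m0) m1) m2) m3) m4) m5) m6) m7)
  have hAA : FreeAbelianGroup.of (gw [0,1,0,2,1,2]) + FreeAbelianGroup.of (gw [0,1,0,2,1,2]) ∈ S := by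
    have rel := mem_h2 (gw [0,3,1,3,0,2,1,2]) (gw [0,1,0,2,1,2]) (gw [3,1,3,2,1,2]) [] [1] [2,1,2] 0 3 rfl rfl rfl
    have m0 := mem_rank (gw [0,3,1,3,0,2,1,2]) (by decide)
    have m1 := mem_iso (gw [3,1,3,2,1,2]) (gw [0,1,0,2,1,2]) ⟨(Equiv.swap 0 3), by decide⟩
    have key : FreeAbelianGroup.of (gw [0,1,0,2,1,2]) + FreeAbelianGroup.of (gw [0,1,0,2,1,2]) = (((FreeAbelianGroup.of (gw [0,3,1,3,0,2,1,2]) + FreeAbelianGroup.of (gw [0,1,0,2,1,2]) + FreeAbelianGroup.of (gw [3,1,3,2,1,2])) - FreeAbelianGroup.of (gw [0,3,1,3,0,2,1,2])) - (FreeAbelianGroup.of (gw [3,1,3,2,1,2]) - FreeAbelianGroup.of (gw [0,1,0,2,1,2]))) := by abel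
    exact key ▸ (S.sub_mem (S.sub_mem rel m0) m1)
  have hAg : FreeAbelianGroup.of (gw [0,1,0,2,1,2]) + FreeAbelianGroup.of (gw [0,1,0,1]) ∈ S := by
    have rel := mem_h3 (gw [0,1,0,2,1,2]) (gw [0,1,0,1]) (gw [0,0,2,2]) (gw [1,2,1,2]) (gw [1,0,2,0,2,1]) (gw [1,0,0,1]) (gw [0,2,0,2]) (gw [1,2,2,1]) [] [] [] [] 0 1 2 rfl rfl rfl rfl rfl rfl rfl rfl
    have m0 := mem_dd (gw [0,0,2,2]) [] [2,2] 0 rfl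
    have m1 := mem_iso (gw [1,2,1,2]) (gw [0,1,0,1]) ⟨((Equiv.swap 0 1).trans (Equiv.swap 1 2)), by decide⟩
    have m2 := mem_iso (gw [1,0,2,0,2,1]) (gw [0,1,2,1,2,0]) ⟨(Equiv.swap 0 1), by decide⟩
    have m3 := mem_dd (gw [1,0,0,1]) [1] [1] 0 rfl
    have m4 := mem_iso (gw [0,2,0,2]) (gw [0,1,0,1]) ⟨(Equiv.swap 1 2), by decide⟩
    have m5 := mem_dd (gw [1,2,2,1]) [1] [1] 2 rfl
    have key : FreeAbelianGroup.of (gw [0,1,0,2,1,2]) + FreeAbelianGroup.of (gw [0,1,0,1]) = ((((((((FreeAbelianGroup.of (gw [0,1,0,2,1,2]) + FreeAbelianGroup.of (gw [0,1,0,1]) + FreeAbelianGroup.of (gw [0,0,2,2]) + FreeAbelianGroup.of (gw [1,2,1,2]) - FreeAbelianGroup.of (gw [1,0,2,0,2,1]) - FreeAbelianGroup.of (gw [1,0,0,1]) - FreeAbelianGroup.of (gw [0,2,0,2]) - FreeAbelianGroup.of (gw [1,2,2,1])) - FreeAbelianGroup.of (gw [0,0,2,2])) - (FreeAbelianGroup.of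 (gw [1,2,1,2]) - FreeAbelianGroup.of (gw [0,1,0,1]))) + (FreeAbelianGroup.of (gw [1,0,2,0,2,1]) - FreeAbelianGroup.of (gw [0,1,2,1,2,0]))) + FreeAbelianGroup.of (gw [0,1,2,1,2,0])) + FreeAbelianGroup.of (gw [1,0,0,1])) + (FreeAbelianGroup.of (gw [0,2,0,2]) - FreeAbelianGroup.of (gw [0,1,0,1]))) + FreeAbelianGroup.of (gw [1,2,2,1])) := by abel
    exact key ▸ (S.add_mem (S.add_mem (S.add_mem (S.add_mem (S.add_mem (S.sub_mem (S.sub_mem rel m0) m1) m2) hE) m3) m4) m5)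
  have h2g : FreeAbelianGroup.of (gw [0,1,0,1]) + FreeAbelianGroup.of (gw [0,1,0,1]) ∈ S := by
    have key : FreeAbelianGroup.of (gw [0,1,0,1]) + FreeAbelianGroup.of (gw [0,1,0,1]) = ((FreeAbelianGroup.of (gw [0,1,0,2,1,2]) + FreeAbelianGroup.of (gw [0,1,0,1])) + (FreeAbelianGroup.of (gw [0,1,0,2,1,2]) + FreeAbelianGroup.of (gw [0,1,0,1]))) - (FreeAbelianGroup.of (gw [0,1,0,2,1,2]) + FreeAbelianGroup.of (gw [0,1,0,2,1,2])) := by abel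
    exact key ▸ (S.sub_mem (S.add_mem hAg hAg) hAA)
  have hC : FreeAbelianGroup.of (gw [0,1,2,0,2,1]) ∈ S := by
    have rel := mem_h2 (gw [0,1,2,0,2,1]) (gw [0,1,0,1]) (gw [0,2,0,2]) [0] [0] [] 1 2 rfl rfl rfl
    have m1 := mem_iso (gw [0,2,0,2]) (gw [0,1,0,1]) ⟨(Equiv.swap 1 2), by decide⟩
    have key : FreeAbelianGroup.of (gw [0,1,2,0,2,1]) = (((FreeAbelianGroup.of (gw [0,1,2,0,2,1]) + FreeAbelianGroup.of (gw [0,1,0,1]) + FreeAbelianGroup.of (gw [0,2,0,2])) - (FreeAbelianGroup.of (gw [0,2,0,2]) - FreeAbelianGroup.of (gw [0,1,0,1]))) - (FreeAbelianGroup.of (gw [0,1,0,1]) + FreeAbelianGroup.of (gw [0,1,0,1]))) := by abel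
    exact key ▸ (S.sub_mem (S.sub_mem rel m1) h2g)
  have hD : FreeAbelianGroup.of (gw [0,1,2,1,0,2]) ∈ S := by
    have rel := mem_h2 (gw [0,1,2,1,0,2]) (gw [0,2,0,2]) (gw [1,2,1,2]) [] [2] [2] 0 1 rfl rfl rfl
    have m0 := mem_iso (gw [0,2,0,2]) (gw [0,1,0,1]) ⟨(Equiv.swap 1 2), by decide⟩
    have m1 := mem_iso (gw [1,2,1,2]) (gw [0,1,0,1]) ⟨((Equiv.swap 0 1).trans (Equiv.swap 1 2)), by decide⟩
    have key : FreeAbelianGroup.of (gw [0,1,2,1,0,2]) = ((((FreeAbelianGroup.of (gw [0,1,2,1,0,2]) + FreeAbelianGroup.of (gw [0,2,0,2]) + FreeAbelianGroup.of (gw [1,2,1,2])) - (FreeAbelianGroup.of (gw [0,2,0,2]) - FreeAbelianGroup.of (gw [0,1,0,1]))) - (FreeAbelianGroup.of (gw [1,2,1,2]) - FreeAbelianGroup.of (gw [0,1,0,1]))) - (FreeAbelianGroup.of (gw [0,1,0,1]) + FreeAbelianGroup.of (gw [0,1,0,1]))) := by abel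
    exact key ▸ (S.sub_mem (S.sub_mem (S.sub_mem rel m0) m1) h2g)
  have hB : FreeAbelianGroup.of (gw [0,1,2,0,1,2]) ∈ S := by
    have rel := mem_h3 (gw [3,0,1,3,0,2,1,2]) (gw [3,0,1,3,0,1]) (gw [3,0,3,0,2,2]) (gw [3,1,3,2,1,2]) (gw [3,1,0,3,2,0,2,1]) (gw [3,1,0,3,0,1]) (gw [3,0,3,2,0,2]) (gw [3,1,3,2,2,1]) [3] [3] [] [] 0 1 2 rfl rfl rfl rfl rfl rfl rfl rfl
    have m0 := mem_rank (gw [3,0,1,3,0,2,1,2]) (by decide)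
    have m1 := mem_iso (gw [3,0,1,3,0,1]) (gw [0,1,2,0,1,2]) ⟨((Equiv.swap 1 2).trans ((Equiv.swap 0 1).trans (Equiv.swap 0 3))), by decide⟩
    have m2 := mem_dd (gw [3,0,3,0,2,2]) [3,0,3,0] [] 2 rfl
    have m3 := mem_iso (gw [3,1,3,2,1,2]) (gw [0,1,0,2,1,2]) ⟨(Equiv.swap 0 3), by decide⟩
    have m4 := mem_rank (gw [3,1,0,3,2,0,2,1]) (by decide)
    have m5 := mem_iso (gw [3,1,0,3,0,1]) (gw [0,1,2,0,2,1]) ⟨((Equiv.swap 0 2).trans (Equiv.swap 0 3)), by decide⟩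
    have m6 := mem_iso (gw [3,0,3,2,0,2]) (gw [0,1,0,2,1,2]) ⟨((Equiv.swap 0 1).trans (Equiv.swap 0 3)), by decide⟩
    have m7 := mem_dd (gw [3,1,3,2,2,1]) [3,1,3] [1] 2 rfl
    have key : FreeAbelianGroup.of (gw [0,1,2,0,1,2]) = ((((((((((FreeAbelianGroup.of (gw [3,0,1,3,0,2,1,2]) + FreeAbelianGroup.of (gw [3,0,1,3,0,1]) + FreeAbelianGroup.of (gw [3,0,3,0,2,2]) + FreeAbelianGroup.of (gw [3,1,3,2,1,2]) - FreeAbelianGroup.of (gw [3,1,0,3,2,0,2,1]) - FreeAbelianGroup.of (gw [3,1,0,3,0,1]) - FreeAbelianGroup.of (gw [3,0,3,2,0,2]) - FreeAbelianGroup.of (gw [3,1,3,2,2,1])) - FreeAbelianGroup.of (gw [3,0,1,3,0,2,1,2])) - (FreeAbelianGroup.of (gw [3,0,1,3,0,1]) - FreeAbelianGroup.of (gw [0,1,2,0,1,2]))) - FreeAbelianGroup.of (gw [3,0,3,0,2,2])) - (FreeAbelianGroup.of (gw [3,1,3,2,1,2]) - FreeAbelianGroup.of (gw [0,1,0,2,1,2])))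 + FreeAbelianGroup.of (gw [3,1,0,3,2,0,2,1])) + (FreeAbelianGroup.of (gw [3,1,0,3,0,1]) - FreeAbelianGroup.of (gw [0,1,2,0,2,1]))) + FreeAbelianGroup.of (gw [0,1,2,0,2,1])) + (FreeAbelianGroup.of (gw [3,0,3,2,0,2]) - FreeAbelianGroup.of (gw [0,1,0,2,1,2]))) + FreeAbelianGroup.of (gw [3,1,3,2,2,1])) := by abel
    exact key ▸ (S.add_mem (S.add_mem (S.add_mem (S.add_mem (S.add_mem (S.sub_mem (S.sub_mem (S.sub_mem (S.sub_mem rel m0) m1) m2) m3) m4) m5) hC) m6) m7)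
  have hA : FreeAbelianGroup.of (gw [0,1,0,2,1,2]) ∈ S := by
    have rel := mem_h3 (gw [0,1,3,0,2,3,1,2]) (gw [0,1,3,0,3,1]) (gw [0,3,0,2,3,2]) (gw [1,3,2,3,1,2]) (gw [1,0,3,2,0,3,2,1]) (gw [1,0,3,0,3,1]) (gw [0,3,2,0,3,2]) (gw [1,3,2,3,2,1]) [] [3] [3] [] 0 1 2 rfl rfl rfl rfl rfl rfl rfl rfl
    have m0 := mem_rank (gw [0,1,3,0,2,3,1,2]) (by decide)
    have m1 := mem_iso (gw [0,1,3,0,3,1]) (gw [0,1,2,0,2,1]) ⟨(Equiv.swap 2 3), by decide⟩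
    have m2 := mem_iso (gw [0,3,0,2,3,2]) (gw [0,1,0,2,1,2]) ⟨(Equiv.swap 1 3), by decide⟩
    have m3 := mem_iso (gw [1,3,2,3,1,2]) (gw [0,1,2,1,0,2]) ⟨((Equiv.swap 0 1).trans (Equiv.swap 1 3)), by decide⟩
    have m4 := mem_rank (gw [1,0,3,2,0,3,2,1]) (by decide)
    have m5 := mem_iso (gw [1,0,3,0,3,1]) (gw [0,1,2,1,2,0]) ⟨((Equiv.swap 0 1).trans (Equiv.swap 2 3)), by decide⟩
    have m6 := mem_iso (gw [0,3,2,0,3,2]) (gw [0,1,2,0,1,2]) ⟨(Equiv.swap 1 3), by decide⟩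
    have m7 := mem_iso (gw [1,3,2,3,2,1]) (gw [0,1,2,1,2,0]) ⟨((Equiv.swap 0 1).trans (Equiv.swap 1 3)), by decide⟩
    have key : FreeAbelianGroup.of (gw [0,1,0,2,1,2]) = ((((((((((((((FreeAbelianGroup.of (gw [0,1,3,0,2,3,1,2]) + FreeAbelianGroup.of (gw [0,1,3,0,3,1]) + FreeAbelianGroup.of (gw [0,3,0,2,3,2]) + FreeAbelianGroup.of (gw [1,3,2,3,1,2]) - FreeAbelianGroup.of (gw [1,0,3,2,0,3,2,1]) - FreeAbelianGroup.of (gw [1,0,3,0,3,1]) - FreeAbelianGroup.of (gw [0,3,2,0,3,2]) - FreeAbelianGroup.of (gw [1,3,2,3,2,1])) - FreeAbelianGroup.of (gw [0,1,3,0,2,3,1,2])) - (FreeAbelianGroup.of (gw [0,1,3,0,3,1]) - FreeAbelianGroup.of (gw [0,1,2,0,2,1]))) - FreeAbelianGroup.of (gw [0,1,2,0,2,1])) - (FreeAbelianGroup.of (gw [0,3,0,2,3,2]) - FreeAbelianGroup.of (gw [0,1,0,2,1,2]))) - (FreeAbelianGroup.of (gw [1,3,2,3,1,2]) - FreeAbelianGroup.of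 (gw [0,1,2,1,0,2]))) - FreeAbelianGroup.of (gw [0,1,2,1,0,2])) + FreeAbelianGroup.of (gw [1,0,3,2,0,3,2,1])) + (FreeAbelianGroup.of (gw [1,0,3,0,3,1]) - FreeAbelianGroup.of (gw [0,1,2,1,2,0]))) + FreeAbelianGroup.of (gw [0,1,2,1,2,0])) + (FreeAbelianGroup.of (gw [0,3,2,0,3,2]) - FreeAbelianGroup.of (gw [0,1,2,0,1,2]))) + FreeAbelianGroup.of (gw [0,1,2,0,1,2])) + (FreeAbelianGroup.of (gw [1,3,2,3,2,1]) - FreeAbelianGroup.of (gw [0,1,2,1,2,0]))) + FreeAbelianGroup.of (gw [0,1,2,1,2,0])) := by abel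
    exact key ▸ (S.add_mem (S.add_mem (S.add_mem (S.add_mem (S.add_mem (S.add_mem (S.add_mem (S.sub_mem (S.sub_mem (S.sub_mem (S.sub_mem (S.sub_mem (S.sub_mem rel m0) m1) hC) m2) m3) hD) m4) m5) hE) m6) hB) m7) hE)
  have hg : FreeAbelianGroup.of (gw [0,1,0,1]) ∈ S := by
    have key : FreeAbelianGroup.of (gw [0,1,0,1]) = (FreeAbelianGroup.of (gw [0,1,0,2,1,2]) + FreeAbelianGroup.of (gw [0,1,0,1])) - FreeAbelianGroup.of (gw [0,1,0,2,1,2]) := by abel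
    exact key ▸ (S.sub_mem hAg hA)
  exact ⟨hg, hA, hB, hC, hD, hE⟩

lemma of_mem_of_eq {v c : List ℕ} (hv : IsGauss v) (hvc : v = c)
    (hc : ∀ h : IsGauss c, of (⟨c, h⟩ : GWgen) ∈ S) : of (⟨v, hv⟩ : GWgen) ∈ S := by
  cases hvc; exact hc hv

lemma iso_reduce {v : List ℕ} (c : List ℕ) (hv : IsGauss v) (σ : ℕ ≃ ℕ)
    (hσ : v.map σ = c) (hc : ∀ h : IsGauss c, of (⟨c, h⟩ : GWgen) ∈ S) :
    of (⟨v, hv⟩ : GWgen) ∈ S := by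
  have hcG : IsGauss c := hσ ▸ isGauss_map σ hv
  have h1 : of (⟨v, hv⟩ : GWgen) - of (⟨c, hcG⟩ : GWgen) ∈ S :=
    mem_iso _ _ ⟨σ, hσ⟩
  have h2 := hc hcG
  have key : of (⟨v, hv⟩ : GWgen)
      = (of (⟨v, hv⟩ : GWgen) - of (⟨c, hcG⟩ : GWgen)) + of (⟨c, hcG⟩ : GWgen) := by abel
  exact key ▸ S.add_mem h1 h2

lemma len_destruct6 (l : List ℕ) (h : l.length = 6) :
    ∃ a b c d e f, l = [a,b,c,d,e,f] := by
  rcases l with _|⟨a,_|⟨b,_|⟨c,_|⟨d,_|⟨e,_|⟨f,_|⟨g,l⟩⟩⟩⟩⟩⟩⟩ <;>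
    first
      | exact ⟨a,b,c,d,e,f,rfl⟩
      | simp at h

lemma len_destruct4 (l : List ℕ) (h : l.length = 4) :
    ∃ a b c d, l = [a,b,c,d] := by
  rcases l with _|⟨a,_|⟨b,_|⟨c,_|⟨d,_|⟨e,l⟩⟩⟩⟩⟩ <;>
    first
      | exact ⟨a,b,c,d,rfl⟩
      | simp at h

lemma len_destruct2 (l : List ℕ) (h : l.length = 2) :
    ∃ a b, l = [a,b] := by
  rcases l with _|⟨a,_|⟨b,_|⟨c,l⟩⟩⟩ <;>
    first
      | exact ⟨a,b,rfl⟩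
      | simp at h

/-- Every nonempty Gauss word lies in `S`. -/
lemma of_mem (w : List ℕ) (h : IsGauss w) (hne : w ≠ []) : of (⟨w, h⟩ : GWgen) ∈ S := by
  obtain ⟨hg, hA, hB, hC, hD, hE⟩ := canon_mem
  by_cases hr : 3 < rank w
  · exact mem_rank _ hr
  push_neg at hr
  have hlen := length_eq h
  have hdl := rank_eq_dedup_length w
  have hnd := w.nodup_dedup
  rcases hd : w.dedup with _ | ⟨a, _ | ⟨b, _ | ⟨c, _ | ⟨d, l⟩⟩⟩⟩
  case neg.cons.cons.cons.cons =>
    rw [hd] at hdl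
    simp at hdl
    omega
  · exact absurd (List.dedup_eq_nil _ |>.1 hd) hne
  · -- rank 1 : w = [a,a]
    rw [hd] at hdl
    simp at hdl
    have hlw : w.length = 2 := by omega
    obtain ⟨x, y, rfl⟩ := len_destruct2 w hlw
    have hmem : ∀ u ∈ [x, y], u = a := by
      intro u hu
      have : u ∈ List.dedup [x, y] := List.mem_dedup.2 hu
      rw [hd] at this
      simpa using this
    have hx := hmem x (by simp)
    have hy := hmem y (by simp)
    exact of_mem_of_eq h (by rw [hx, hy]) (fun hh => mem_dd _ [] [] a (by simp))
  · -- rank 2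
    rw [hd] at hdl
    simp at hdl
    have hab : a ≠ b := by
      rw [hd] at hnd; simp at hnd; exact hnd
    obtain ⟨σ, ha, hb⟩ := exists_perm2 hab
    refine iso_reduce (w.map σ) h σ rfl (fun hv => ?_)
    have hlv : (w.map σ).length = 4 := by rw [List.length_map]; omega
    have hdv : (w.map σ).dedup = [0, 1] := by
      rw [List.dedup_map_of_injective σ.injective, hd]
      simp [ha, hb]
    have hbound : ∀ x ∈ w.map σ, x < 2 := by
      intro x hx
      have : x ∈ (w.map σ).dedup := List.mem_dedup.2 hx
      rw [hdv] at this
      simp at this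
      omega
    obtain ⟨x1, x2, x3, x4, he⟩ := len_destruct4 (w.map σ) hlv
    have hG : isGaussB (w.map σ) = true := isGaussB_iff.2 hv
    rw [he] at hG hdv hbound
    refine of_mem_of_eq hv he (fun hv2 => ?_)
    have e1 : x1 < 2 := hbound _ (by simp)
    have e2 : x2 < 2 := hbound _ (by simp)
    have e3 : x3 < 2 := hbound _ (by simp)
    have e4 : x4 < 2 := hbound _ (by simp)
    have := enum4 ⟨x1, e1⟩ ⟨x2, e2⟩ ⟨x3, e3⟩ ⟨x4, e4⟩ hG hdv
    clear he
    rcases this with hDD | h1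
    · obtain ⟨xx, yy, A, hxy⟩ := hasDD_spec hDD
      exact mem_dd _ xx yy A hxy
    · exact of_mem_of_eq _ h1 (fun hh => hg)
  · -- rank 3
    rw [hd] at hdl
    simp at hdl
    have hnd' := hnd
    rw [hd] at hnd'
    simp [List.nodup_cons] at hnd'
    obtain ⟨⟨hab, hac⟩, hbc⟩ := hnd'
    obtain ⟨σ, ha, hb, hc⟩ := exists_perm3 hab hac hbc
    refine iso_reduce (w.map σ) h σ rfl (fun hv => ?_)
    have hlv : (w.map σ).length = 6 := by rw [List.length_map]; omega
    have hdv : (w.map σ).dedup = [0, 1, 2] := by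
      rw [List.dedup_map_of_injective σ.injective, hd]
      simp [ha, hb, hc]
    have hbound : ∀ x ∈ w.map σ, x < 3 := by
      intro x hx
      have : x ∈ (w.map σ).dedup := List.mem_dedup.2 hx
      rw [hdv] at this
      simp at this
      omega
    obtain ⟨x1, x2, x3, x4, x5, x6, he⟩ := len_destruct6 (w.map σ) hlv
    have hG : isGaussB (w.map σ) = true := isGaussB_iff.2 hv
    rw [he] at hG hdv hbound
    refine of_mem_of_eq hv he (fun hv2 => ?_)
    have e1 : x1 < 3 := hbound _ (by simp)
    have e2 : x2 < 3 := hbound _ (by simp)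
    have e3 : x3 < 3 := hbound _ (by simp)
    have e4 : x4 < 3 := hbound _ (by simp)
    have e5 : x5 < 3 := hbound _ (by simp)
    have e6 : x6 < 3 := hbound _ (by simp)
    have := enum6 ⟨x1, e1⟩ ⟨x2, e2⟩ ⟨x3, e3⟩ ⟨x4, e4⟩ ⟨x5, e5⟩ ⟨x6, e6⟩ hG hdv
    clear he
    rcases this with hDD | h1 | h1 | h1 | h1 | h1
    · obtain ⟨xx, yy, A, hxy⟩ := hasDD_spec hDD
      exact mem_dd _ xx yy A hxy
    · exact of_mem_of_eq _ h1 (fun hh => hA)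
    · exact of_mem_of_eq _ h1 (fun hh => hB)
    · exact of_mem_of_eq _ h1 (fun hh =>
        iso_reduce [0,1,2,0,2,1] hh (Equiv.swap 1 2) (by decide) (fun _ => hC))
    · exact of_mem_of_eq _ h1 (fun hh =>
        iso_reduce [0,1,2,1,0,2] hh (Equiv.swap 0 1) (by decide) (fun _ => hD))
    · exact of_mem_of_eq _ h1 (fun hh =>
        iso_reduce [0,1,2,1,2,0] hh ((Equiv.swap 1 2).trans (Equiv.swap 0 1)) (by decide)
          (fun _ => hE))

lemma isGauss_nil : IsGauss [] := fun x hx => absurd hx List.not_mem_nil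

noncomputable def phi : FreeAbelianGroup GWgen →+ ℤ :=
  FreeAbelianGroup.lift (fun p : GWgen => if p.1 = [] then (1 : ℤ) else 0)

lemma phi_of (p : GWgen) : phi (of p) = if p.1 = [] then 1 else 0 :=
  FreeAbelianGroup.lift_apply_of _ _

lemma phi_rel : ∀ g ∈ relSet 3, phi g = 0 := by
  rintro g (((( ⟨p, q, ⟨σ, hσ⟩, rfl⟩ | ⟨p, x, y, A, hp, rfl⟩) |
      ⟨p, q, q', x, y, z, A, B, h1, h2, h3, rfl⟩) |
      ⟨p1, p2, p3, p4, q1, q2, q3, q4, x, y, z, t, A, B, C, h1, h2, h3, h4, h5, h6, h7, h8, rfl⟩) |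
      ⟨p, hp, rfl⟩)
  · rw [map_sub, phi_of, phi_of]
    have : p.1 = [] ↔ q.1 = [] := by
      constructor
      · intro hh; rw [← hσ, hh]; rfl
      · intro hh; rw [← hσ] at hh; exact List.map_eq_nil_iff.1 hh
    by_cases hp : p.1 = []
    · rw [if_pos hp, if_pos (this.1 hp)]; ring
    · rw [if_neg hp, if_neg (fun hq => hp (this.2 hq))]; ring
  · rw [phi_of, if_neg (by rw [hp]; simp)]
  · rw [map_add, map_add, phi_of, phi_of, phi_of,
      if_neg (by rw [h1]; simp), if_neg (by rw [h2]; simp), if_neg (by rw [h3]; simp)]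
    ring
  · rw [map_sub, map_sub, map_sub, map_sub, map_add, map_add, map_add,
      phi_of, phi_of, phi_of, phi_of, phi_of, phi_of, phi_of, phi_of,
      if_neg (by rw [h1]; simp), if_neg (by rw [h2]; simp), if_neg (by rw [h3]; simp),
      if_neg (by rw [h4]; simp), if_neg (by rw [h5]; simp), if_neg (by rw [h6]; simp),
      if_neg (by rw [h7]; simp), if_neg (by rw [h8]; simp)]
    ring
  · rw [phi_of, if_neg ?_]
    intro hq
    rw [hq] at hp
    simp [rank, lettersOf] at hp

lemma S_le_ker : S ≤ phi.ker :=
  (AddSubgroup.closure_le _).2 (fun g hg => AddMonoidHom.mem_ker.2 (phi_rel g hg))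

noncomputable def phiBar : Gn 3 →+ ℤ :=
  QuotientAddGroup.lift S phi (fun g hg => AddMonoidHom.mem_ker.1 (S_le_ker hg))

noncomputable def psi : ℤ →+ Gn 3 :=
  zmultiplesHom (Gn 3) (cls 3 ⟨[], isGauss_nil⟩)

lemma cls_eq_zero_of_ne_nil (w : List ℕ) (h : IsGauss w) (hne : w ≠ []) :
    cls 3 ⟨w, h⟩ = 0 :=
  (QuotientAddGroup.eq_zero_iff _).2 (of_mem w h hne)

lemma phiBar_psi (n : ℤ) : phiBar (psi n) = n := by
  have h1 : psi n = n • cls 3 ⟨[], isGauss_nil⟩ := rfl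
  rw [h1, map_zsmul]
  have h2 : phiBar (cls 3 ⟨[], isGauss_nil⟩) = 1 := by
    show phi (of ⟨[], isGauss_nil⟩) = 1
    exact (phi_of ⟨[], isGauss_nil⟩).trans (if_pos rfl)
  rw [h2]
  simp

lemma psi_phiBar (x : Gn 3) : psi (phiBar x) = x := by
  induction x using QuotientAddGroup.induction_on with
  | H a =>
    induction a using FreeAbelianGroup.induction_on with
    | zero => simp
    | of p =>
      have h1 : phiBar (QuotientAddGroup.mk (of p)) = phi (of p) := rfl
      rw [h1, phi_of]
      by_cases hp : p.1 = []
      · rw [if_pos hp]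
        have hpe : p = ⟨[], isGauss_nil⟩ := Subtype.ext hp
        rw [hpe]
        show (1 : ℤ) • cls 3 ⟨[], isGauss_nil⟩ = _
        rw [one_zsmul]
        rfl
      · rw [if_neg hp, map_zero]
        have : QuotientAddGroup.mk (of p) = cls 3 ⟨p.1, p.2⟩ := rfl
        rw [this, cls_eq_zero_of_ne_nil p.1 p.2 hp]
    | neg p ih =>
      rw [QuotientAddGroup.mk_neg, map_neg, map_neg, ih]
    | add x y ihx ihy =>
      rw [QuotientAddGroup.mk_add, map_add, map_add, ihx, ihy]

noncomputable def gnEquivInt : Gn 3 ≃+ ℤ :=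
  AddMonoidHom.toAddEquiv phiBar psi
    (AddMonoidHom.ext psi_phiBar) (AddMonoidHom.ext phiBar_psi)

/-- for homotopy of Gauss words, `G₃ ≅ ℤ`; that is, the generators
`ABAB`, `ABACBC`, `ABCABC`, `ABCACB`, `ABCBAC`, `ABCBCA` all vanish in `G₃`. -/
theorem G3_gauss_words_iso_int :
    Nonempty (Gn 3 ≃+ ℤ) ∧
    (∀ h : IsGauss [0,1,0,1], cls 3 ⟨[0,1,0,1], h⟩ = 0) ∧
    (∀ h : IsGauss [0,1,0,2,1,2], cls 3 ⟨[0,1,0,2,1,2], h⟩ = 0) ∧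
    (∀ h : IsGauss [0,1,2,0,1,2], cls 3 ⟨[0,1,2,0,1,2], h⟩ = 0) ∧
    (∀ h : IsGauss [0,1,2,0,2,1], cls 3 ⟨[0,1,2,0,2,1], h⟩ = 0) ∧
    (∀ h : IsGauss [0,1,2,1,0,2], cls 3 ⟨[0,1,2,1,0,2], h⟩ = 0) ∧
    (∀ h : IsGauss [0,1,2,1,2,0], cls 3 ⟨[0,1,2,1,2,0], h⟩ = 0) := by
  refine ⟨⟨gnEquivInt⟩, ?_, ?_, ?_, ?_, ?_, ?_⟩ <;>
    intro h <;> exact cls_eq_zero_of_ne_nil _ h (by simp)
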